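/- Let γ > 0, let A_F ∈ ℝ^{n×n} with A_F − γI_n invertible, let Â_F ∈ ℝ^{(r−1)n×n}, and let S ∈ ℝ^{n×n} be symmetric positive definite satisfying the Lyapunov-type strict inequality A_FᵀS + SA_F + Â_Fᵀ(S ⊗ I_{r−1})Â_F ≺ 0. Then, with K = (A_F + γI_n)(A_F − γI_n)⁻¹ and N = Â_F(A_F − γI_n)⁻¹, the Stein-type strict inequality KᵀSK + 2γ Nᵀ(S ⊗ I_{r−1})N ≺ S holds (the Cayley transform maps stochastic continuous-time stability inequalities to stochastic discrete-time ones). -/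

import Mathlib

open Matrix
open scoped Kronecker

lemma aux_conj_posDef {m : Type*} [Fintype m] [DecidableEq m] {L B : Matrix m m ℝ}
    (hL : L.PosDef) (hB : IsUnit B) : (Bᵀ * L * B).PosDef := by
  have hinj : Function.Injective (B.mulVec) := mulVec_injective_iff_isUnit.2 hB
  refine Matrix.PosDef.of_dotProduct_mulVec_pos ?_ ?_
  · have := isHermitian_conjTranspose_mul_mul B hL.isHermitian
    simpa [conjTranspose_eq_transpose_of_trivial] using this
  · intro x hx
    have hBx : B *ᵥ x ≠ 0 := fun h => hx (hinj (by simpa using h))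
    have := hL.dotProduct_mulVec_pos hBx
    simpa [star_trivial, dotProduct_mulVec, vecMul_vecMul, ← mulVec_transpose,
      mulVec_mulVec, Matrix.mul_assoc] using this

lemma aux_smul_posDef {m : Type*} [Fintype m] [DecidableEq m] {c : ℝ} (hc : 0 < c)
    {L : Matrix m m ℝ} (hL : L.PosDef) : (c • L).PosDef := by
  refine Matrix.PosDef.of_dotProduct_mulVec_pos ?_ ?_
  · have h := hL.isHermitian
    unfold Matrix.IsHermitian at h ⊢
    rw [conjTranspose_smul, h]
    simp
  · intro x hx
    have := hL.dotProduct_mulVec_pos hx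
    simp only [smul_mulVec, dotProduct_smul, smul_eq_mul]
    positivity


/-- The Cayley transform maps stochastic continuous-time stability inequalities to
stochastic discrete-time ones: if A_Fᵀ S + S A_F + Â_Fᵀ (S ⊗ I_{r−1}) Â_F ≺ 0 with
S ≻ 0, then Kᵀ S K + 2γ Nᵀ (S ⊗ I_{r−1}) N ≺ S, where K = (A_F + γI)(A_F − γI)⁻¹
and N = Â_F (A_F − γI)⁻¹.  Here `(r−1)n` is realized as `Fin n × Fin (r-1)`. -/
theorem stmt17 {n r : ℕ} (hn : 0 < n) (hr : 2 ≤ r)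
    (γ : ℝ) (hγ : 0 < γ)
    (AF : Matrix (Fin n) (Fin n) ℝ)
    (hAFu : IsUnit (AF - γ • 1))
    (AhF : Matrix (Fin n × Fin (r - 1)) (Fin n) ℝ)
    (S : Matrix (Fin n) (Fin n) ℝ) (hS : S.PosDef)
    (hLyap : (-(AFᵀ * S + S * AF +
        AhFᵀ * (S ⊗ₖ (1 : Matrix (Fin (r - 1)) (Fin (r - 1)) ℝ)) * AhF)).PosDef)
    (K : Matrix (Fin n) (Fin n) ℝ) (hK : K = (AF + γ • 1) * (AF - γ • 1)⁻¹)
    (N : Matrix (Fin n × Fin (r - 1)) (Fin n) ℝ) (hN : N = AhF * (AF - γ • 1)⁻¹) :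
    (S - (Kᵀ * S * K + (2 * γ) •
        (Nᵀ * (S ⊗ₖ (1 : Matrix (Fin (r - 1)) (Fin (r - 1)) ℝ)) * N))).PosDef := by
  classical
  set Sh := (S ⊗ₖ (1 : Matrix (Fin (r - 1)) (Fin (r - 1)) ℝ)) with hSh
  set M : Matrix (Fin n) (Fin n) ℝ := AF - γ • 1 with hMdef
  set P : Matrix (Fin n) (Fin n) ℝ := AF + γ • 1 with hPdef
  set L : Matrix (Fin n) (Fin n) ℝ := -(AFᵀ * S + S * AF + AhFᵀ * Sh * AhF) with hLdef
  have hdet : IsUnit M.det := isUnit_iff_isUnit_det M |>.mp hAFu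
  have hMl : M⁻¹ * M = 1 := nonsing_inv_mul M hdet
  have hMr : M * M⁻¹ = 1 := mul_nonsing_inv M hdet
  have hMu : IsUnit (M⁻¹) := isUnit_nonsing_inv_iff.mpr hAFu
  -- the inner identity
  have inner : Mᵀ * S * M - (Pᵀ * S * P + (2 * γ) • (AhFᵀ * Sh * AhF))
      = (2 * γ) • L := by
    rw [hMdef, hPdef, hLdef]
    simp only [transpose_sub, transpose_add, transpose_smul, transpose_one,
      sub_mul, mul_sub, add_mul, mul_add, Matrix.smul_mul, Matrix.mul_smul,
      Matrix.one_mul, Matrix.mul_one, smul_smul]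
    module
  -- rewrite S
  have hSfact : S = (M⁻¹)ᵀ * (Mᵀ * S * M) * M⁻¹ := by
    calc S = 1 * S * 1 := by rw [Matrix.one_mul, Matrix.mul_one]
    _ = (M * M⁻¹)ᵀ * S * (M * M⁻¹) := by rw [hMr, transpose_one]
    _ = (M⁻¹)ᵀ * (Mᵀ * S * M) * M⁻¹ := by
        rw [transpose_mul]; simp only [Matrix.mul_assoc]
  have key : S - (Kᵀ * S * K + (2 * γ) • (Nᵀ * Sh * N))
      = (2 * γ) • ((M⁻¹)ᵀ * L * M⁻¹) := by
    rw [hK, hN]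
    calc S - ((P * M⁻¹)ᵀ * S * (P * M⁻¹) +
          (2 * γ) • ((AhF * M⁻¹)ᵀ * Sh * (AhF * M⁻¹)))
        = (M⁻¹)ᵀ * (Mᵀ * S * M - (Pᵀ * S * P + (2 * γ) • (AhFᵀ * Sh * AhF))) * M⁻¹ := by
          nth_rewrite 1 [hSfact]
          simp only [transpose_mul, Matrix.mul_sub, Matrix.sub_mul, Matrix.mul_add,
            Matrix.add_mul, Matrix.mul_smul, Matrix.smul_mul, Matrix.mul_assoc]
      _ = (M⁻¹)ᵀ * ((2 * γ) • L) * M⁻¹ := by rw [inner]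
      _ = (2 * γ) • ((M⁻¹)ᵀ * L * M⁻¹) := by
          rw [Matrix.mul_smul, Matrix.smul_mul]
  rw [key]
  exact aux_smul_posDef (by linarith) (aux_conj_posDef hLyap hMu)
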